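/- Let u: [0,∞) → (0,∞) be continuous, strictly increasing to ∞ (hence invertible) with u(x)/u(⌊x⌋) → 1 as x → ∞, and let p, q, s be real sequences with u_n := u(n). Then for every λ ∈ (1,∞): s_n → s (V, p, q, u) if and only if s_n → s (𝒱, p, q, u, λ); in particular, the moving-average limit holds for some λ ∈ (1,∞) if and only if it holds for all λ ∈ (1,∞). -/

import Mathlib

open Filter Finset Topology

/-- The Voronoi convolution `(a∘b)` of two sequences. -/
noncomputable def vconv (a b : ℕ → ℝ) : ℕ → ℝ
  | 0 => a 0 * b 0
  | n + 1 => (∑ k ∈ Finset.range (n + 2), a (n + 1 - k) * b k)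
      - ∑ k ∈ Finset.range (n + 1), a (n - k) * b k

/-- The Voronoi mean transform `t_n = (1/u_n) ∑_{k=0}^n p_{n-k} q_k s_k`. -/
noncomputable def vT (p q u s : ℕ → ℝ) (n : ℕ) : ℝ :=
  (1 / u n) * ∑ k ∈ Finset.range (n + 1), p (n - k) * q k * s k

/-- `w_λ(x) = u⁻¹(u(x)/λ)`, the inverse taken on `[0,∞)`. -/
noncomputable def wl (u : ℝ → ℝ) (lam x : ℝ) : ℝ :=
  Function.invFunOn u (Set.Ici 0) (u x / lam)

/-- The Voronoi moving average
`c_x = (1/u(x)) ∑_{w_λ(x) < k ≤ x} a_k` (sum over integers `k`). -/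
noncomputable def movAvg (u : ℝ → ℝ) (a : ℕ → ℝ) (lam x : ℝ) : ℝ :=
  (1 / u x) * ∑ k ∈ Finset.range (⌊x⌋₊ + 1),
    if wl u lam x < (k : ℝ) then a k else 0

lemma sum_vconv (a b : ℕ → ℝ) (n : ℕ) :
    ∑ k ∈ Finset.range (n+1), vconv a b k = ∑ k ∈ Finset.range (n+1), a (n - k) * b k := by
  induction n with
  | zero => simp [vconv]
  | succ n ih =>
    rw [Finset.sum_range_succ, ih]
    show _ + vconv a b (n+1) = _
    rw [vconv]; ring

lemma sum_ite_tail (a : ℕ → ℝ) (m n : ℕ) (h : m < n) :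
    ∑ k ∈ Finset.range (n+1), (if m < k then a k else 0)
      = ∑ k ∈ Finset.range (n+1), a k - ∑ k ∈ Finset.range (m+1), a k := by
  rw [← Finset.sum_filter, ← Finset.sum_Ico_eq_sub a (by omega : m + 1 ≤ n + 1)]
  congr 1; ext k
  simp only [Finset.mem_filter, Finset.mem_Ico, Finset.mem_range]
  omega

/-- Theorem 5: for `u` continuous, strictly increasing to `∞` on `[0,∞)`
with `u(x) ∼ u(⌊x⌋)`, and any `λ ∈ (1,∞)`, `(V,p,q,u) ⇔ (𝒱,p,q,u,λ)`; in particular the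
moving-average statement holds for some `λ ∈ (1,∞)` iff it holds for all such `λ`. -/
theorem voronoi_iff_movingAverage (u : ℝ → ℝ) (p q s : ℕ → ℝ) (sVal : ℝ)
    (hpos : ∀ x ≥ (0 : ℝ), 0 < u x)
    (hcont : ContinuousOn u (Set.Ici 0))
    (hmono : StrictMonoOn u (Set.Ici 0))
    (htop : Tendsto u atTop atTop)
    (hfloor : Tendsto (fun x : ℝ => u x / u (⌊x⌋₊ : ℝ)) atTop (𝓝 1)) :
    (∀ lam : ℝ, 1 < lam →
      (Tendsto (vT p q (fun n : ℕ => u n) s) atTop (𝓝 sVal) ↔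
        Tendsto (fun n : ℕ => movAvg u (vconv p (fun k => q k * s k)) lam n)
          atTop (𝓝 ((1 - lam⁻¹) * sVal)))) ∧
    ((∃ lam : ℝ, 1 < lam ∧
        Tendsto (fun n : ℕ => movAvg u (vconv p (fun k => q k * s k)) lam n)
          atTop (𝓝 ((1 - lam⁻¹) * sVal))) ↔
      (∀ lam : ℝ, 1 < lam →
        Tendsto (fun n : ℕ => movAvg u (vconv p (fun k => q k * s k)) lam n)
          atTop (𝓝 ((1 - lam⁻¹) * sVal)))) := by
  have key : ∀ lam : ℝ, 1 < lam →
      (Tendsto (vT p q (fun n : ℕ => u n) s) atTop (𝓝 sVal) ↔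
        Tendsto (fun n : ℕ => movAvg u (vconv p (fun k => q k * s k)) lam n)
          atTop (𝓝 ((1 - lam⁻¹) * sVal))) := by
    intro lam hl
    set t := vT p q (fun n : ℕ => u n) s with ht
    set a := vconv p (fun k => q k * s k) with ha
    have hlam0 : (0:ℝ) < lam := lt_trans one_pos hl
    have hu0 : ∀ n : ℕ, 0 < u n := fun n => hpos _ (Nat.cast_nonneg n)
    -- partial sums
    have hS : ∀ n : ℕ, ∑ k ∈ Finset.range (n+1), a k = u n * t n := by
      intro n
      rw [ha, sum_vconv, ht]
      simp only [vT]
      rw [← mul_assoc, mul_one_div, div_self (hu0 n).ne', one_mul]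
      exact Finset.sum_congr rfl fun k _ => by ring
    have hucast : Tendsto (fun n : ℕ => u n) atTop atTop :=
      htop.comp tendsto_natCast_atTop_atTop
    -- wl facts
    have hwl : ∀ᶠ n : ℕ in atTop, 0 ≤ wl u lam n ∧ u (wl u lam n) = u n / lam
        ∧ wl u lam n < (n:ℝ) := by
      filter_upwards [hucast.eventually_ge_atTop (lam * u 0)] with n hn
      have hmem : u (n:ℝ) / lam ∈ Set.Icc (u 0) (u (n:ℝ)) := by
        constructor
        · rw [le_div_iff₀ hlam0]; linarith
        · exact div_le_self (hu0 n).le hl.le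
      have hiv := intermediate_value_Icc (Nat.cast_nonneg n : (0:ℝ) ≤ n)
        (hcont.mono (Set.Icc_subset_Ici_self)) hmem
      obtain ⟨c, hc1, hc2⟩ := hiv
      have hex : ∃ y ∈ Set.Ici (0:ℝ), u y = u n / lam := ⟨c, hc1.1, hc2⟩
      have hwmem : wl u lam n ∈ Set.Ici (0:ℝ) := Function.invFunOn_mem hex
      have hweq : u (wl u lam n) = u n / lam := Function.invFunOn_eq hex
      refine ⟨hwmem, hweq, ?_⟩
      by_contra hlt
      push_neg at hlt
      have h1 : u (n:ℝ) ≤ u (wl u lam (n:ℝ)) :=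
        hmono.monotoneOn (Set.mem_Ici.2 (Nat.cast_nonneg n)) hwmem hlt
      rw [hweq] at h1
      have : u (n:ℝ) / lam < u (n:ℝ) := div_lt_self (hu0 n) hl
      linarith
    have hWtop : Tendsto (fun n : ℕ => wl u lam n) atTop atTop := by
      rw [tendsto_atTop]
      intro b
      filter_upwards [hucast.eventually_ge_atTop (lam * u (max b 0)), hwl] with n h1 h2
      have hub : u (max b 0) ≤ u (wl u lam n) := by
        rw [h2.2.1, le_div_iff₀ hlam0]; linarith
      have hge : max b 0 ≤ wl u lam n := by
        by_contra hlt
        push_neg at hlt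
        have := hmono h2.1 (Set.mem_Ici.2 (le_max_right b 0)) hlt
        linarith
      linarith [le_max_left b 0]
    set m : ℕ → ℕ := fun n => ⌊wl u lam (n:ℝ)⌋₊ with hm
    have hm_top : Tendsto m atTop atTop := tendsto_nat_floor_atTop.comp hWtop
    have hm_lt : ∀ᶠ n : ℕ in atTop, m n < n := by
      filter_upwards [hwl] with n hn
      exact (Nat.floor_lt hn.1).2 hn.2.2
    -- ratio tendsto
    have hr : Tendsto (fun n : ℕ => u (m n) / u n) atTop (𝓝 lam⁻¹) := by
      have hg : Tendsto (fun n : ℕ => u (wl u lam n) / u (m n)) atTop (𝓝 1) :=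
        hfloor.comp hWtop
      have := (hg.inv₀ one_ne_zero).mul_const lam⁻¹
      rw [inv_one, one_mul] at this
      refine this.congr' ?_
      filter_upwards [hwl] with n hn
      have hwpos : 0 < u (wl u lam n) := by
        rw [hn.2.1]; exact div_pos (hu0 n) hlam0
      have hmpos : 0 < u (m n) := hpos _ (Nat.cast_nonneg _)
      have hne : u (n:ℝ) ≠ 0 := (hu0 n).ne'
      rw [hn.2.1]
      field_simp
    have hrnn : ∀ n : ℕ, 0 ≤ u (m n) / u n :=
      fun n => div_nonneg (hpos _ (Nat.cast_nonneg _)).le (hu0 n).le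
    -- splitting
    have hsplit : ∀ᶠ n : ℕ in atTop,
        movAvg u a lam n = t n - (u (m n) / u n) * t (m n) := by
      filter_upwards [hwl, hm_lt] with n hn hmn
      unfold movAvg
      rw [Nat.floor_natCast]
      have : ∀ k ∈ Finset.range (n+1),
          (if wl u lam (n:ℝ) < (k:ℝ) then a k else 0) = (if m n < k then a k else 0) := by
        intro k _
        congr 1
        simp only [eq_iff_iff]
        rw [hm]
        exact (Nat.floor_lt hn.1).symm
      rw [Finset.sum_congr rfl this, sum_ite_tail a (m n) n hmn, hS n, hS (m n)]
      have hne : u (n:ℝ) ≠ 0 := (hu0 n).ne'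
      field_simp
    constructor
    · intro hV
      have h1 : Tendsto (fun n => t n - (u (m n)/u n) * t (m n)) atTop
          (𝓝 (sVal - lam⁻¹ * sVal)) :=
        hV.sub (hr.mul (hV.comp hm_top))
      have : (1 - lam⁻¹) * sVal = sVal - lam⁻¹ * sVal := by ring
      rw [this]
      exact Tendsto.congr' (hsplit.mono fun n hn => hn.symm) h1
    · intro hc
      set c := fun n : ℕ => movAvg u a lam n with hcdef
      set d := fun n : ℕ => (c n - (1 - lam⁻¹) * sVal) + ((u (m n)/u n) - lam⁻¹) * sVal
        with hd
      have hkey : ∀ᶠ n : ℕ in atTop,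
          t n - sVal = d n + (u (m n)/u n) * (t (m n) - sVal) := by
        filter_upwards [hsplit] with n hn
        have hcn : c n = t n - (u (m n)/u n) * t (m n) := hn
        rw [hd]
        simp only [hcn]
        ring
      have hd0 : Tendsto d atTop (𝓝 0) := by
        have h1 := (hc.sub_const ((1 - lam⁻¹) * sVal)).add
          ((hr.sub_const lam⁻¹).mul_const sVal)
        simpa using h1
      set ρ : ℝ := (1 + lam⁻¹) / 2 with hρ
      have hinv1 : lam⁻¹ < 1 := inv_lt_one_of_one_lt₀ hl
      have hinv0 : 0 < lam⁻¹ := inv_pos.2 hlam0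
      have hρ1 : ρ < 1 := by rw [hρ]; linarith
      have hρ0 : 0 < ρ := by rw [hρ]; linarith
      have hrρ : ∀ᶠ n : ℕ in atTop, u (m n)/u n ≤ ρ :=
        hr.eventually (eventually_le_nhds (by rw [hρ]; linarith))
      have hd1 : ∀ᶠ n : ℕ in atTop, |d n| ≤ 1 := by
        have := hd0.abs
        rw [abs_zero] at this
        exact this.eventually (eventually_le_nhds one_pos)
      obtain ⟨N, hN⟩ := eventually_atTop.1 (((hkey.and hd1).and (hrρ.and hm_lt)))
      set f := fun n : ℕ => |t n - sVal| with hf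
      set B : ℝ := (Finset.range (N+1)).sup' ⟨0, Finset.mem_range.2 (Nat.succ_pos N)⟩ f
        with hB
      have hB0 : 0 ≤ B :=
        le_trans (abs_nonneg _) (Finset.le_sup' f (Finset.mem_range.2 (Nat.succ_pos N)))
      set M : ℝ := 1/(1-ρ) + B with hM
      have h1ρ : 0 < 1 - ρ := by linarith
      have hMbig : 1 + ρ * M ≤ M := by
        rw [hM]
        have e1 : 1 + ρ * (1/(1-ρ)) = 1/(1-ρ) := by field_simp; ring
        nlinarith
      have hBdd : ∀ n, f n ≤ M := by
        intro n
        induction n using Nat.strong_induction_on with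
        | _ n ih =>
          by_cases hn : n < N
          · have h1 : f n ≤ B := Finset.le_sup' f (Finset.mem_range.2 (by omega))
            have h2 : (0:ℝ) ≤ 1/(1-ρ) := div_nonneg one_pos.le h1ρ.le
            rw [hM]
            linarith
          · push_neg at hn
            obtain ⟨⟨hk, hd1n⟩, hrn, hmn⟩ := hN n hn
            calc f n = |d n + (u (m n)/u n) * (t (m n) - sVal)| := by
                  simp only [hf]; rw [hk]
              _ ≤ |d n| + (u (m n)/u n) * f (m n) := by
                  simp only [hf]
                  refine (abs_add_le _ _).trans ?_
                  rw [abs_mul, abs_of_nonneg (hrnn n)]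
              _ ≤ 1 + ρ * M := by
                  have := ih (m n) hmn
                  gcongr
              _ ≤ M := hMbig
      set L : ℝ := limsup f atTop with hL
      have hbdd_le : IsBoundedUnder (· ≤ ·) atTop f := isBoundedUnder_of ⟨M, hBdd⟩
      have hbdd_ge : IsBoundedUnder (· ≥ ·) atTop f :=
        isBoundedUnder_of ⟨0, fun n => abs_nonneg _⟩
      have hLbound : ∀ ε : ℝ, 0 < ε → L ≤ ε + (lam⁻¹ + ε) * (L + ε) := by
        intro ε hε
        have h1 : ∀ᶠ n : ℕ in atTop, f n < L + ε :=
          eventually_lt_of_limsup_lt (by linarith) hbdd_le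
        have h2 : ∀ᶠ n : ℕ in atTop, f (m n) < L + ε := hm_top.eventually h1
        have h3 : ∀ᶠ n : ℕ in atTop, |d n| ≤ ε := by
          have := hd0.abs
          rw [abs_zero] at this
          exact this.eventually (eventually_le_nhds hε)
        have h4 : ∀ᶠ n : ℕ in atTop, u (m n)/u n ≤ lam⁻¹ + ε :=
          hr.eventually (eventually_le_nhds (by linarith))
        refine limsup_le_of_le hbdd_ge.isCoboundedUnder_le ?_
        filter_upwards [hkey, h2, h3, h4] with n hk h2n h3n h4n
        calc f n = |d n + (u (m n)/u n) * (t (m n) - sVal)| := by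
              simp only [hf]; rw [hk]
          _ ≤ |d n| + (u (m n)/u n) * f (m n) := by
              simp only [hf]
              refine (abs_add_le _ _).trans ?_
              rw [abs_mul, abs_of_nonneg (hrnn n)]
          _ ≤ ε + (lam⁻¹ + ε) * (L + ε) := by
              refine add_le_add h3n (mul_le_mul h4n h2n.le (abs_nonneg _) (by linarith))
      have hLle : L ≤ lam⁻¹ * L := by
        have cont : Tendsto (fun ε : ℝ => ε + (lam⁻¹ + ε)*(L+ε)) (𝓝[>] 0)
            (𝓝 (0 + (lam⁻¹ + 0)*(L+0))) := by
          apply Tendsto.mono_left _ nhdsWithin_le_nhds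
          exact Continuous.tendsto (continuous_id.add
            ((continuous_const.add continuous_id).mul
              (continuous_const.add continuous_id))) 0
        have := ge_of_tendsto cont (by
          filter_upwards [self_mem_nhdsWithin] with ε hε
          exact hLbound ε hε)
        simpa using this
      have hL0 : L ≤ 0 := by
        by_contra hcon
        push_neg at hcon
        have := mul_lt_of_lt_one_left hcon hinv1
        linarith
      have hf0 : Tendsto f atTop (𝓝 0) := by
        refine tendsto_order.2 ⟨fun b hb => ?_, fun b hb => ?_⟩
        · exact Eventually.of_forall fun n => lt_of_lt_of_le hb (abs_nonneg _)
        · exact eventually_lt_of_limsup_lt (lt_of_le_of_lt hL0 hb) hbdd_le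
      rw [tendsto_iff_dist_tendsto_zero]
      simpa [Real.dist_eq, hf] using hf0
  refine ⟨key, ?_, ?_⟩
  · rintro ⟨lam, hl, h⟩ lam' hl'
    exact (key lam' hl').1 ((key lam hl).2 h)
  · intro h
    exact ⟨2, one_lt_two, h 2 one_lt_two⟩
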